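/- For every η ∈ (0, 1/2), β > 0, τ̄ > 0 and every λ with 0 ≤ λ ≤ log(1/η)/(2βτ̄), the inequality log((1-η)/(1 - η e^{λβτ̄})) ≤ 2λβτ̄/(log(1/η))² holds (in particular 1 - η e^{λβτ̄} > 0 in this range). -/

import Mathlib

set_option maxHeartbeats 1000000

theorem log_ratio_bound (η β τ l : ℝ) (hη0 : 0 < η) (hη : η < 1 / 2)
    (hβ : 0 < β) (hτ : 0 < τ) (hl0 : 0 ≤ l)
    (hl : l ≤ Real.log (1 / η) / (2 * β * τ)) :
    0 < 1 - η * Real.exp (l * β * τ) ∧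
    Real.log ((1 - η) / (1 - η * Real.exp (l * β * τ))) ≤
      2 * l * β * τ / (Real.log (1 / η)) ^ 2 := by
  set s := Real.sqrt η with hs
  have hs0 : 0 < s := Real.sqrt_pos.2 hη0
  have hηs : s ^ 2 = η := Real.sq_sqrt hη0.le
  have hs1 : s < 1 := by nlinarith
  set L := Real.log (1 / η) with hLdef
  have hL0 : 0 < L := Real.log_pos (by rw [lt_div_iff₀ hη0]; linarith)
  have hLs : L = -(2 * Real.log s) := by
    rw [hLdef, one_div, Real.log_inv, ← hηs, Real.log_pow]
    push_cast; ring
  -- s * L ≤ 1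
  have he : (2 : ℝ) ≤ Real.exp 1 := by
    have := Real.add_one_le_exp 1; linarith
  have hsL : s * L ≤ 1 := by
    have h1 : Real.log (1 / (Real.exp 1 * s)) ≤ 1 / (Real.exp 1 * s) - 1 :=
      Real.log_le_sub_one_of_pos (by positivity)
    have h2 : Real.log (1 / (Real.exp 1 * s)) = -(1 + Real.log s) := by
      rw [one_div, Real.log_inv, Real.log_mul (Real.exp_pos 1).ne' hs0.ne', Real.log_exp]
    rw [h2] at h1
    have h3 : -Real.log s ≤ 1 / (Real.exp 1 * s) := by linarith
    have h4 : s * (-Real.log s) ≤ 1 / Real.exp 1 := by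
      have := mul_le_mul_of_nonneg_left h3 hs0.le
      calc s * (-Real.log s) ≤ s * (1 / (Real.exp 1 * s)) := this
        _ = 1 / Real.exp 1 := by field_simp
    have h5 : 1 / Real.exp 1 ≤ 1 / 2 := by
      apply div_le_div_of_nonneg_left (by norm_num) (by norm_num) he
    nlinarith [hLs]
  set t := l * β * τ with ht
  have hbt : (0 : ℝ) < 2 * β * τ := by positivity
  have ht0 : 0 ≤ t := by positivity
  have htT : t ≤ L / 2 := by
    have h := (le_div_iff₀ hbt).1 hl
    nlinarith
  have hexpT : Real.exp (L / 2) = 1 / s := by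
    rw [hLs, show -(2 * Real.log s) / 2 = -Real.log s by ring, Real.exp_neg,
      Real.exp_log hs0, one_div]
  set T := L / 2 with hT
  have hT0 : 0 < T := by positivity
  -- chord bound
  have hchord : Real.exp t ≤ 1 + (t / T) * (Real.exp T - 1) := by
    have hu0 : 0 ≤ t / T := div_nonneg ht0 hT0.le
    have hu1 : t / T ≤ 1 := (div_le_one hT0).2 htT
    have h := convexOn_exp.2 (Set.mem_univ (0 : ℝ)) (Set.mem_univ T)
      (by linarith : (0:ℝ) ≤ 1 - t / T) hu0 (by ring)
    simp only [smul_eq_mul, mul_zero, zero_add, Real.exp_zero, mul_one] at h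
    rw [div_mul_cancel₀ t hT0.ne'] at h
    linarith
  rw [hexpT] at hchord
  -- key bound: η * exp t ≤ η + (t/T)*(s - η)
  have hηexp : η * Real.exp t ≤ η + (t / T) * (s - η) := by
    have hηs' : η * (1 / s - 1) = s - η := by
      field_simp; nlinarith
    calc η * Real.exp t ≤ η * (1 + (t / T) * (1 / s - 1)) :=
          mul_le_mul_of_nonneg_left hchord hη0.le
      _ = η + (t / T) * (η * (1 / s - 1)) := by ring
      _ = η + (t / T) * (s - η) := by rw [hηs']
  have hu1 : t / T ≤ 1 := (div_le_one hT0).2 htT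
  have hu0 : 0 ≤ t / T := div_nonneg ht0 hT0.le
  have hsη : 0 ≤ s - η := by nlinarith
  have hle_s : η * Real.exp t ≤ s := by
    have h := mul_le_mul_of_nonneg_right hu1 hsη
    rw [one_mul] at h
    linarith
  have hpos : 0 < 1 - η * Real.exp t := by linarith
  refine ⟨hpos, ?_⟩
  clear_value s L t T
  clear hl hLdef hLs hexpT hs
  have hlog1 : Real.log ((1 - η) / (1 - η * Real.exp t)) ≤
      (1 - η) / (1 - η * Real.exp t) - 1 :=
    Real.log_le_sub_one_of_pos (div_pos (by linarith) hpos)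
  have heq : (1 - η) / (1 - η * Real.exp t) - 1
      = (η * Real.exp t - η) / (1 - η * Real.exp t) := by
    field_simp
    ring
  have hdiv : (η * Real.exp t - η) / (1 - η * Real.exp t)
      ≤ ((t / T) * (s - η)) / (1 - s) := by
    apply div_le_div₀ (by positivity) (by linarith) (by linarith) (by linarith)
  have heq2 : ((t / T) * (s - η)) / (1 - s) = (t / T) * s := by
    have h1s : (1 : ℝ) - s ≠ 0 := by linarith
    rw [← hηs]
    field_simp
  have hfinal : (t / T) * s ≤ 2 * l * β * τ / L ^ 2 := by
    rw [hT]
    have h1 : t / (L / 2) * s = 2 * t * s / L := by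
      rw [div_div_eq_mul_div]; ring
    have ht' : 2 * l * β * τ = 2 * t := by rw [ht]; ring
    rw [h1, ht', div_le_div_iff₀ hL0 (by positivity)]
    have h2 : 0 ≤ t * L * (1 - s * L) :=
      mul_nonneg (mul_nonneg ht0 hL0.le) (by linarith)
    nlinarith [h2]
  calc Real.log ((1 - η) / (1 - η * Real.exp t)) ≤ (1 - η) / (1 - η * Real.exp t) - 1 := hlog1
    _ = (η * Real.exp t - η) / (1 - η * Real.exp t) := heq
    _ ≤ ((t / T) * (s - η)) / (1 - s) := hdiv
    _ = (t / T) * s := heq2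
    _ ≤ 2 * l * β * τ / L ^ 2 := hfinal
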